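/- Let p be a prime and G a finite p-group of nilpotency class c that can be generated by d elements, and let t = min{r,s} where exp(G/[G,G]) = p^r and exp(Z(G)) = p^s. Then for every p-subgroup P of Aut(G), the exponent of P is at most p^{t²c − t + d − 1} if p > 2, and at most p^{t²c − t + 2d − 1} if p = 2. -/

import Mathlib

/-- `P(G)`: the subgroup `γ₂(G)·G^p` for odd `p`, and `γ₂(G)·G⁴` for `p = 2`, where `G^m` is the
subgroup generated by `m`-th powers. -/
def groupP (p : ℕ) (G : Type*) [Group G] : Subgroup G :=
  commutator G ⊔ Subgroup.closure {x : G | ∃ g : G, g ^ (if p = 2 then 4 else p) = x}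

/-- `Aut_N(G)`: the group of automorphisms `u` of `G` such that `x⁻¹ · u x ∈ N` for all `x`. -/
def autSub {G : Type*} [Group G] (N : Subgroup G) : Subgroup (G ≃* G) where
  carrier := {u : G ≃* G | ∀ x : G, x⁻¹ * u x ∈ N}
  one_mem' := by
    intro x
    simpa using N.one_mem
  mul_mem' := by
    intro u v hu hv x
    have h := N.mul_mem (hv x) (hu (v x))
    simpa [MulAut.mul_apply, mul_assoc] using h
  inv_mem' := by
    intro u hu x
    have h := N.inv_mem (hu (u⁻¹ x))
    have hx : u (u⁻¹ x) = x := by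
      simp [MulAut.inv_def]
    rw [hx] at h
    simpa [mul_inv_rev] using h

open scoped commutatorElement

instance centerCommGroup' (M : Type*) [Group M] : CommGroup (Subgroup.center M) :=
  { (inferInstance : Group (Subgroup.center M)) with
    mul_comm := fun a b => Subtype.ext (Subgroup.mem_center_iff.mp b.2 a) }

/-- Key binomial valuation: `p^(E+1-i) ∣ C(p^E, i)` for `i ≥ 1`. -/
lemma key_dvd_choose {p : ℕ} (hp : p.Prime) (E i : ℕ) (hi : 1 ≤ i) :
    p ^ (E + 1 - i) ∣ (p ^ E).choose i := by
  rcases le_or_gt i E with hiE | hiE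
  swap
  · have : E + 1 - i = 0 := by omega
    simp [this]
  have hpE : 1 ≤ p ^ E := Nat.one_le_pow _ _ hp.pos
  have hid : p ^ E * (p ^ E - 1).choose (i - 1) = (p ^ E).choose i * i := by
    have := Nat.add_one_mul_choose_eq (p ^ E - 1) (i - 1)
    have h1 : p ^ E - 1 + 1 = p ^ E := by omega
    have h2 : i - 1 + 1 = i := by omega
    rwa [h1, h2] at this
  set a := i.factorization p with ha
  have hpa : p ^ a ∣ i := Nat.ordProj_dvd i p
  have hne : i ≠ 0 := by omega
  have hm : ¬ p ∣ (i / p ^ a) := Nat.not_dvd_ordCompl hp hne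
  have hale : a < i := by
    have h1 : p ^ a ≤ i := Nat.le_of_dvd (by omega) hpa
    have h2 : a < p ^ a := Nat.lt_pow_self (n := a) hp.one_lt
    omega
  have haE : a ≤ E := by omega
  have hdvd : p ^ E ∣ (p ^ E).choose i * i := ⟨(p ^ E - 1).choose (i - 1), hid.symm⟩
  obtain ⟨m, him⟩ := hpa
  have hmm : i / p ^ a = m := by
    rw [him]; exact Nat.mul_div_cancel_left m (pow_pos hp.pos a)
  rw [hmm] at hm
  have hsplit : p ^ E = p ^ a * p ^ (E - a) := by
    rw [← pow_add]; congr 1; omega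
  have hdvd2 : p ^ (E - a) ∣ (p ^ E).choose i * m := by
    have h : p ^ a * p ^ (E - a) ∣ (p ^ E).choose i * (p ^ a * m) := by
      rw [← hsplit, ← him]; exact hdvd
    rw [show (p ^ E).choose i * (p ^ a * m) = p ^ a * ((p ^ E).choose i * m) by ring] at h
    exact (mul_dvd_mul_iff_left (pow_pos hp.pos a).ne').mp h
  have hcop : Nat.Coprime (p ^ (E - a)) m :=
    Nat.Coprime.pow_left _ (hp.coprime_iff_not_dvd.mpr hm)
  exact dvd_trans (pow_dvd_pow p (by omega)) (hcop.dvd_of_dvd_mul_right hdvd2)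

section PowerFormula

variable {M : Type*} [Group M]

/-- `w^n x = x * ∏_{i=1}^{n} (f^[i] x)^(C(n,i))` for `w x = x * f x` with `f` a central-valued
homomorphism. -/
lemma power_formula (w : Monoid.End M) (f : M →* M)
    (hcen : ∀ x : M, f x ∈ Subgroup.center M) (hw : ∀ x, w x = x * f x) (n : ℕ) (x : M) :
    (w ^ n) x = x * ↑(∏ i ∈ Finset.range n,
      (f.codRestrict (Subgroup.center M) hcen (f^[i] x)) ^ (n.choose (i + 1))) := by
  set F : M →* Subgroup.center M := f.codRestrict (Subgroup.center M) hcen with hF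
  have hFcoe : ∀ y : M, ((F y : Subgroup.center M) : M) = f y := fun y => rfl
  set FC : Subgroup.center M →* Subgroup.center M := F.comp (Subgroup.center M).subtype with hFC
  induction n with
  | zero => simp
  | succ n ih =>
    have hws : (w ^ (n + 1)) x = w ((w ^ n) x) := by
      rw [pow_succ']; rfl
    rw [hws, ih, hw]
    have hfmul : f (x * ↑(∏ i ∈ Finset.range n, F (f^[i] x) ^ n.choose (i + 1)))
        = f x * ↑(FC (∏ i ∈ Finset.range n, F (f^[i] x) ^ n.choose (i + 1))) := by
      rw [map_mul]; rfl
    rw [hfmul, map_prod]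
    have hprod2 : (∏ i ∈ Finset.range n, FC (F (f^[i] x) ^ n.choose (i + 1)))
        = ∏ i ∈ Finset.range n, F (f^[i + 1] x) ^ n.choose (i + 1) := by
      apply Finset.prod_congr rfl
      intro i _
      rw [map_pow]
      congr 1
      show F (f (f^[i] x)) = F (f^[i + 1] x)
      rw [← Function.iterate_succ_apply' f i x]
    rw [hprod2]
    have key : (∏ i ∈ Finset.range n, F (f^[i] x) ^ n.choose (i + 1)) *
        (F x * ∏ i ∈ Finset.range n, F (f^[i + 1] x) ^ n.choose (i + 1)) =
        ∏ i ∈ Finset.range (n + 1), F (f^[i] x) ^ (n + 1).choose (i + 1) := by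
      calc (∏ i ∈ Finset.range n, F (f^[i] x) ^ n.choose (i + 1)) *
            (F x * ∏ i ∈ Finset.range n, F (f^[i + 1] x) ^ n.choose (i + 1))
          = (∏ i ∈ Finset.range (n + 1), F (f^[i] x) ^ n.choose (i + 1)) *
            (∏ i ∈ Finset.range (n + 1), F (f^[i] x) ^ n.choose i) := by
            rw [Finset.prod_range_succ, Finset.prod_range_succ']
            simp only [Nat.choose_succ_self, pow_zero, mul_one, Function.iterate_zero_apply,
              Nat.choose_zero_right, pow_one]
            simp [mul_comm, mul_left_comm, mul_assoc]
        _ = ∏ i ∈ Finset.range (n + 1), F (f^[i] x) ^ (n + 1).choose (i + 1) := by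
            rw [← Finset.prod_mul_distrib]
            apply Finset.prod_congr rfl
            intro i _
            rw [Nat.choose_succ_succ n i, pow_add]
            exact mul_comm _ _
    calc x * ↑(∏ i ∈ Finset.range n, F (f^[i] x) ^ n.choose (i + 1)) *
          (f x * ↑(∏ i ∈ Finset.range n, F (f^[i + 1] x) ^ n.choose (i + 1)))
        = x * ((∏ i ∈ Finset.range n, F (f^[i] x) ^ n.choose (i + 1)) *
            (F x * ∏ i ∈ Finset.range n, F (f^[i + 1] x) ^ n.choose (i + 1)) :
            Subgroup.center M) := by
          rw [← hFcoe x]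
          push_cast
          simp [mul_assoc]
      _ = x * ↑(∏ i ∈ Finset.range (n + 1), F (f^[i] x) ^ (n + 1).choose (i + 1)) := by
          rw [key]

end PowerFormula

section OrderBound

variable {M : Type*} [Group M]

/-- Main engine: if the iterates of the displacement homomorphism `f` of `w` satisfy the order
bounds `(f^[i] x)^(p^(E+1-i)) = 1`, then `w^(p^E) = 1`. -/
lemma aut_order_bound {p : ℕ} (hp : p.Prime) (E : ℕ) (w : Monoid.End M) (f : M →* M)
    (hcen : ∀ x : M, f x ∈ Subgroup.center M) (hw : ∀ x, w x = x * f x)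
    (hord : ∀ i x, 1 ≤ i → (f^[i] x) ^ (p ^ (E + 1 - i)) = 1) (x : M) :
    (w ^ p ^ E) x = x := by
  rw [power_formula w f hcen hw (p ^ E) x]
  set F : M →* Subgroup.center M := f.codRestrict (Subgroup.center M) hcen with hF
  have h1 : (∏ i ∈ Finset.range (p ^ E),
      F (f^[i] x) ^ ((p ^ E).choose (i + 1))) = 1 := by
    apply Finset.prod_eq_one
    intro i _
    have he : E + 1 - (i + 1) = E - i := by omega
    have hordF : (F (f^[i] x)) ^ (p ^ (E - i)) = 1 := by
      apply Subtype.ext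
      push_cast
      have h2 : ((F (f^[i] x) : Subgroup.center M) : M) = f^[i + 1] x := by
        show f (f^[i] x) = f^[i+1] x
        rw [← Function.iterate_succ_apply' f i x]
      rw [h2]
      have := hord (i + 1) x (by omega)
      rwa [he] at this
    obtain ⟨q, hq⟩ := key_dvd_choose hp E (i + 1) (by omega)
    rw [he] at hq
    rw [hq, pow_mul, hordF, one_pow]
  rw [h1]
  simp

/-- Leading-term extraction: if `exp M ∣ p` and `w^(p^m) = id` then `f^[p^m] = 1`. -/
lemma lead {p : ℕ} (hp : p.Prime) (w : Monoid.End M) (f : M →* M)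
    (hcen : ∀ x : M, f x ∈ Subgroup.center M) (hw : ∀ x, w x = x * f x)
    (hexp : ∀ x : M, x ^ p = 1) (m : ℕ) (hid : ∀ x, (w ^ p ^ m) x = x) (x : M) :
    f^[p ^ m] x = 1 := by
  have hform := power_formula w f hcen hw (p ^ m) x
  rw [hid x] at hform
  set F : M →* Subgroup.center M := f.codRestrict (Subgroup.center M) hcen with hF
  have hProd : (∏ i ∈ Finset.range (p ^ m),
      F (f^[i] x) ^ ((p ^ m).choose (i + 1))) = 1 := by
    rw [left_eq_mul] at hform
    exact Subtype.ext hform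
  have hpm : 1 ≤ p ^ m := Nat.one_le_pow _ _ hp.pos
  have hsingle : (∏ i ∈ Finset.range (p ^ m),
      F (f^[i] x) ^ ((p ^ m).choose (i + 1))) =
      F (f^[p ^ m - 1] x) ^ ((p ^ m).choose ((p ^ m - 1) + 1)) := by
    apply Finset.prod_eq_single_of_mem (p ^ m - 1)
    · exact Finset.mem_range.mpr (by omega)
    · intro i hi hne
      have hi' : i + 1 < p ^ m := by
        have := Finset.mem_range.mp hi
        omega
      have hdvd : p ∣ (p ^ m).choose (i + 1) :=
        Nat.Prime.dvd_choose_pow hp (by omega) (by omega)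
      obtain ⟨q, hq⟩ := hdvd
      have hFp : (F (f^[i] x)) ^ p = 1 := by
        apply Subtype.ext
        push_cast
        exact hexp _
      rw [hq, pow_mul, hFp, one_pow]
  have h3 : (p ^ m).choose ((p ^ m - 1) + 1) = 1 := by
    rw [show (p ^ m - 1) + 1 = p ^ m from by omega]; exact Nat.choose_self _
  rw [hsingle, h3, pow_one] at hProd
  have hcoe := congrArg (fun z : Subgroup.center M => (z : M)) hProd
  have hcoe' : f (f^[p ^ m - 1] x) = 1 := hcoe
  rw [show p ^ m = (p ^ m - 1) + 1 by omega, Function.iterate_succ_apply']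
  exact hcoe'

/-- Powers of an endomorphism that fix everything keep fixing everything. -/
lemma end_pow_fix (w : Monoid.End M) (a : ℕ) (h : ∀ x, (w ^ a) x = x) (b : ℕ) (x : M) :
    (w ^ (a * b)) x = x := by
  induction b with
  | zero => simp
  | succ b ih =>
    have : a * (b + 1) = a * b + a := by ring
    rw [this, pow_add]
    show (w ^ (a*b)) ((w ^ a) x) = x
    rw [h x, ih]

/-- Bridge between `MulAut` powers and `Monoid.End` powers. -/
lemma mulaut_pow_apply {G : Type*} [Group G] (v : G ≃* G) (ve : Monoid.End G)
    (hve : ∀ x, ve x = v x) (n : ℕ) : ∀ x : G, (v ^ n) x = (ve ^ n) x := by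
  induction n with
  | zero => intro x; rfl
  | succ n ih =>
    intro x
    rw [pow_succ, pow_succ]
    show (v ^ n) (v x) = (ve ^ n) (ve x)
    rw [hve x, ih (v x)]

end OrderBound

-- ### groupP infrastructure

section GroupP

variable {G : Type*} [Group G] {p : ℕ}

lemma groupP_eq_closure (p : ℕ) (G : Type*) [Group G] :
    groupP p G = Subgroup.closure
      (commutatorSet G ∪ {x : G | ∃ g : G, g ^ (if p = 2 then 4 else p) = x}) := by
  rw [groupP, Subgroup.closure_union, commutator_eq_closure]

lemma commutator_mem_groupP (a b : G) : ⁅a, b⁆ ∈ groupP p G := by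
  rw [groupP_eq_closure]
  exact Subgroup.subset_closure (Or.inl ⟨a, b, rfl⟩)

lemma pow_mem_groupP (g : G) : g ^ (if p = 2 then 4 else p) ∈ groupP p G := by
  rw [groupP_eq_closure]
  exact Subgroup.subset_closure (Or.inr ⟨g, rfl⟩)

instance groupP_normal : (groupP p G).Normal := by
  constructor
  intro n hn g
  have h1 : g * n * g⁻¹ = n * ⁅n⁻¹, g⁆ := by
    simp [commutatorElement_def]
    group
  rw [h1]
  exact Subgroup.mul_mem _ hn (commutator_mem_groupP _ _)

lemma map_groupP_le {H : Type*} [Group H] (φ : G →* H) :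
    (groupP p G).map φ ≤ groupP p H := by
  rw [groupP_eq_closure, groupP_eq_closure, MonoidHom.map_closure]
  rw [Subgroup.closure_le]
  rintro y ⟨x, hx, rfl⟩
  rcases hx with ⟨a, b, rfl⟩ | ⟨g, rfl⟩
  · rw [map_commutatorElement]
    exact Subgroup.subset_closure (Or.inl ⟨φ a, φ b, rfl⟩)
  · rw [map_pow]
    exact Subgroup.subset_closure (Or.inr ⟨φ g, rfl⟩)

lemma mem_groupP_of_mem {H : Type*} [Group H] (φ : G →* H) {x : G}
    (hx : x ∈ groupP p G) : φ x ∈ groupP p H :=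
  map_groupP_le φ (Subgroup.mem_map_of_mem φ hx)

/-- displacement of powers stays in a subgroup. -/
lemma displacement_pow_mem (N : Subgroup G) (v : G ≃* G)
    (hv : ∀ x : G, x⁻¹ * v x ∈ N) (n : ℕ) : ∀ x : G, x⁻¹ * (v ^ n) x ∈ N := by
  induction n with
  | zero => intro x; simpa using N.one_mem
  | succ n ih =>
    intro x
    have h1 : (v ^ (n + 1)) x = v ((v ^ n) x) := by
      rw [pow_succ', MulAut.mul_apply]
    have h2 : x⁻¹ * (v ^ (n+1)) x
        = (x⁻¹ * (v ^ n) x) * (((v ^ n) x)⁻¹ * v ((v ^ n) x)) := by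
      rw [h1]; group
    rw [h2]
    exact N.mul_mem (ih x) (hv _)

end GroupP

-- ### subsingleton criteria

section Subsingleton

variable {G : Type*} [Group G]

lemma subsingleton_of_top_le_bot' (h : (⊤ : Subgroup G) ≤ ⊥) : Subsingleton G := by
  constructor
  intro a b
  have ha : a = 1 := Subgroup.mem_bot.mp (h (Subgroup.mem_top a))
  have hb : b = 1 := Subgroup.mem_bot.mp (h (Subgroup.mem_top b))
  rw [ha, hb]

lemma subsingleton_of_commutator_eq_top [Group.IsNilpotent G]
    (h : commutator G = ⊤) : Subsingleton G := by
  have hall : ∀ n, Subgroup.lowerCentralSeries (⊤ : Subgroup G) n = ⊤ := by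
    intro n
    induction n with
    | zero => rfl
    | succ n ih =>
      rw [lowerCentralSeries_succ, ih]
      rw [commutator_def] at h
      exact h
  obtain ⟨n, hn⟩ := Subgroup.nilpotent_iff_lowerCentralSeries.mp ‹_›
  exact subsingleton_of_top_le_bot' (by rw [← hall n, hn])

lemma subsingleton_of_center_le_bot [Group.IsNilpotent G]
    (h : ∀ x ∈ Subgroup.center G, x = 1) : Subsingleton G := by
  have hall : ∀ n, Subgroup.upperCentralSeries G n = ⊥ := by
    intro n
    induction n with
    | zero => rfl
    | succ n ih =>
      apply le_antisymm _ bot_le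
      intro x hx
      rw [Subgroup.mem_upperCentralSeries_succ_iff] at hx
      have hxc : x ∈ Subgroup.center G := by
        rw [Subgroup.mem_center_iff]
        intro g
        have := hx g
        rw [ih, Subgroup.mem_bot] at this
        have h2 : x * g * x⁻¹ * g⁻¹ = 1 := this
        have h3 : x * g = g * x := by
          have h4 : (x * g) * x⁻¹ = g := mul_inv_eq_one.mp h2
          exact mul_inv_eq_iff_eq_mul.mp h4
        rw [h3]
      simpa using h x hxc
  obtain ⟨n, hn⟩ := ‹Group.IsNilpotent G›.nilpotent
  exact subsingleton_of_top_le_bot' (by rw [← hn, hall n])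

end Subsingleton

-- ### step lemmas

section Steps

variable {G : Type*} [Group G] {p : ℕ}

/-- The displacement map of an endomorphism moving points by central elements, as a hom. -/
def dispHom (v : Monoid.End G) (hZ : ∀ x : G, x⁻¹ * v x ∈ Subgroup.center G) : G →* G where
  toFun := fun x => x⁻¹ * v x
  map_one' := by simp
  map_mul' := by
    intro x y
    have hc := Subgroup.mem_center_iff.mp (hZ x)
    show (x*y)⁻¹ * v (x*y) = (x⁻¹ * v x) * (y⁻¹ * v y)
    rw [map_mul]
    calc (x*y)⁻¹ * (v x * v y) = y⁻¹ * (x⁻¹ * v x) * v y := by group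
      _ = (x⁻¹ * v x) * y⁻¹ * v y := by rw [hc y⁻¹]
      _ = (x⁻¹ * v x) * (y⁻¹ * v y) := by rw [mul_assoc]

lemma dispHom_apply (v : Monoid.End G) (hZ : ∀ x : G, x⁻¹ * v x ∈ Subgroup.center G) (x : G) :
    dispHom v hZ x = x⁻¹ * v x := rfl

lemma central_step (hp : p.Prime) (v : Monoid.End G) (ρ σ : ℕ)
    (hρ : ∀ x : G, x ^ p ^ ρ ∈ commutator G)
    (hσ : ∀ x ∈ Subgroup.center G, x ^ p ^ σ = 1)
    (hW : ∀ x : G, x⁻¹ * v x ∈ groupP p G)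
    (hZ : ∀ x : G, x⁻¹ * v x ∈ Subgroup.center G) :
    ∀ x : G, (v ^ p ^ (min ρ σ)) x = x := by
  set τ := min ρ σ with hτ
  set f := dispHom v hZ with hfdef
  have hfapp : ∀ x : G, f x = x⁻¹ * v x := fun x => rfl
  have hcen : ∀ x : G, f x ∈ Subgroup.center G := fun x => hZ x
  have hWf : ∀ x : G, f x ∈ groupP p G := fun x => hW x
  have hker : ∀ y ∈ commutator G, f y = 1 := by
    have hle : commutator G ≤ f.ker := by
      rw [commutator_def, Subgroup.commutator_le]
      intro g₁ _ g₂ _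
      rw [MonoidHom.mem_ker, map_commutatorElement]
      apply commutatorElement_eq_one_iff_commute.mpr
      exact (Subgroup.mem_center_iff.mp (hcen g₁) (f g₂)).symm
    intro y hy
    exact MonoidHom.mem_ker.mp (hle hy)
  have horder : ∀ y : G, (f y) ^ p ^ τ = 1 := by
    intro y
    rcases le_total ρ σ with hle | hle
    · rw [hτ, min_eq_left hle, ← map_pow]
      exact hker _ (hρ y)
    · rw [hτ, min_eq_right hle]
      exact hσ _ (hcen y)
  have fW : ∀ u ∈ groupP p G, ∃ y : G, f u = (f y) ^ p := by
    intro u hu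
    rw [groupP_eq_closure] at hu
    induction hu using Subgroup.closure_induction with
    | mem x hx =>
      rcases hx with ⟨a, b, rfl⟩ | ⟨g, rfl⟩
      · refine ⟨1, ?_⟩
        rw [map_one, one_pow]
        apply hker
        rw [commutator_def]
        exact Subgroup.commutator_mem_commutator (Subgroup.mem_top a) (Subgroup.mem_top b)
      · by_cases hp2 : p = 2
        · refine ⟨g ^ 2, ?_⟩
          rw [if_pos hp2, hp2]
          rw [show g ^ 4 = (g ^ 2) ^ 2 by group]
          rw [map_pow]
        · refine ⟨g, ?_⟩
          rw [if_neg hp2, map_pow]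
    | one => exact ⟨1, by simp⟩
    | mul u₁ u₂ _ _ h₁ h₂ =>
      obtain ⟨y₁, hy₁⟩ := h₁
      obtain ⟨y₂, hy₂⟩ := h₂
      refine ⟨y₁ * y₂, ?_⟩
      have hcomm : Commute (f y₁) (f y₂) :=
        (Subgroup.mem_center_iff.mp (hcen y₁) (f y₂)).symm
      rw [map_mul, hy₁, hy₂, map_mul, hcomm.mul_pow]
    | inv u _ h =>
      obtain ⟨y, hy⟩ := h
      exact ⟨y⁻¹, by rw [map_inv, hy, map_inv, inv_pow]⟩
  have fiterate : ∀ i, 1 ≤ i → ∀ x : G, ∃ y : G, f^[i] x = (f y) ^ (p ^ (i - 1)) := by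
    intro i hi
    induction i, hi using Nat.le_induction with
    | base => intro x; exact ⟨x, by simp⟩
    | succ i hi ih =>
      intro x
      obtain ⟨y, hy⟩ := ih x
      obtain ⟨z, hz⟩ := fW (f y) (hWf y)
      refine ⟨z, ?_⟩
      rw [Function.iterate_succ_apply', hy, map_pow, hz, ← pow_mul]
      congr 1
      rw [show i + 1 - 1 = (i - 1) + 1 by omega, pow_succ']
  have hord : ∀ (i : ℕ) (x : G), 1 ≤ i → (f^[i] x) ^ (p ^ (τ + 1 - i)) = 1 := by
    intro i x hi
    obtain ⟨y, hy⟩ := fiterate i hi x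
    rw [hy, ← pow_mul]
    have hdvd : p ^ τ ∣ p ^ (i - 1) * p ^ (τ + 1 - i) := by
      rw [← pow_add]
      exact pow_dvd_pow p (by omega)
    obtain ⟨q, hq⟩ := hdvd
    rw [hq, pow_mul, horder, one_pow]
  intro x
  have hw : ∀ y : G, v y = y * f y := by
    intro y
    rw [hfapp, mul_inv_cancel_left]
  exact aut_order_bound hp τ v f hcen hw hord x

lemma abelian_step (hp : p.Prime) (v : Monoid.End G) (τ : ℕ)
    (hcomm : ∀ a b : G, a * b = b * a)
    (hexp : ∀ x : G, x ^ p ^ τ = 1)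
    (hW : ∀ x : G, x⁻¹ * v x ∈ groupP p G) :
    ∀ x : G, (v ^ p ^ (τ - 1)) x = x := by
  have hZ : ∀ x : G, x⁻¹ * v x ∈ Subgroup.center G := by
    intro x
    exact Subgroup.mem_center_iff.mpr (fun g => hcomm g _)
  set f := dispHom v hZ with hfdef
  have hfapp : ∀ x : G, f x = x⁻¹ * v x := fun x => rfl
  have hcen : ∀ x : G, f x ∈ Subgroup.center G := fun x => hZ x
  have hWf : ∀ x : G, f x ∈ groupP p G := fun x => hW x
  have Wpow : ∀ u ∈ groupP p G, ∃ z : G, u = z ^ p := by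
    intro u hu
    rw [groupP_eq_closure] at hu
    induction hu using Subgroup.closure_induction with
    | mem x hx =>
      rcases hx with ⟨a, b, rfl⟩ | ⟨g, rfl⟩
      · refine ⟨1, ?_⟩
        rw [one_pow]
        exact commutatorElement_eq_one_iff_commute.mpr (hcomm a b)
      · by_cases hp2 : p = 2
        · exact ⟨g ^ 2, by rw [if_pos hp2, hp2]; group⟩
        · exact ⟨g, by rw [if_neg hp2]⟩
    | one => exact ⟨1, by simp⟩
    | mul u₁ u₂ _ _ h₁ h₂ =>
      obtain ⟨z₁, hz₁⟩ := h₁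
      obtain ⟨z₂, hz₂⟩ := h₂
      refine ⟨z₁ * z₂, ?_⟩
      have hco : Commute z₁ z₂ := hcomm z₁ z₂
      rw [hz₁, hz₂, hco.mul_pow]
    | inv u _ h =>
      obtain ⟨z, hz⟩ := h
      exact ⟨z⁻¹, by rw [hz, inv_pow]⟩
  have fiterate : ∀ i, 1 ≤ i → ∀ x : G, ∃ z : G, f^[i] x = z ^ (p ^ i) := by
    intro i hi
    induction i, hi using Nat.le_induction with
    | base =>
      intro x
      obtain ⟨z, hz⟩ := Wpow (f x) (hWf x)
      exact ⟨z, by rw [Function.iterate_one, hz, pow_one]⟩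
    | succ i hi ih =>
      intro x
      obtain ⟨z, hz⟩ := ih x
      obtain ⟨z', hz'⟩ := Wpow (f z) (hWf z)
      refine ⟨z', ?_⟩
      rw [Function.iterate_succ_apply', hz, map_pow, hz', ← pow_mul, ← pow_succ']
  have hord : ∀ (i : ℕ) (x : G), 1 ≤ i → (f^[i] x) ^ (p ^ (τ - 1 + 1 - i)) = 1 := by
    intro i x hi
    obtain ⟨z, hz⟩ := fiterate i hi x
    rw [hz, ← pow_mul]
    have hdvd : p ^ τ ∣ p ^ i * p ^ (τ - 1 + 1 - i) := by
      rw [← pow_add]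
      exact pow_dvd_pow p (by omega)
    obtain ⟨q, hq⟩ := hdvd
    rw [hq, pow_mul, hexp, one_pow]
  intro x
  have hw : ∀ y : G, v y = y * f y := by
    intro y
    rw [hfapp, mul_inv_cancel_left]
  exact aut_order_bound hp (τ - 1) v f hcen hw hord x

end Steps

-- ### central-powers commutator identity

lemma commutator_pow_central {G : Type*} [Group G] (x g : G)
    (h : ⁅x, g⁆ ∈ Subgroup.center G) (n : ℕ) : ⁅x ^ n, g⁆ = ⁅x, g⁆ ^ n := by
  set z := ⁅x, g⁆ with hz
  have hzc := Subgroup.mem_center_iff.mp h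
  have hxg : x * g = z * g * x := by
    rw [hz]
    rw [commutatorElement_def]
    group
  have key : ∀ m : ℕ, x ^ m * g = z ^ m * g * x ^ m := by
    intro m
    induction m with
    | zero => simp
    | succ m ih =>
      calc x ^ (m+1) * g = x * (x ^ m * g) := by rw [pow_succ']; group
        _ = x * (z ^ m * g * x ^ m) := by rw [ih]
        _ = (x * z ^ m) * (g * x ^ m) := by group
        _ = (z ^ m * x) * (g * x ^ m) := by
              have hcx : Commute x (z ^ m) := by
                apply Commute.pow_right
                show x * z = z * x
                exact hzc x
              rw [hcx.eq]
        _ = z ^ m * (x * g) * x ^ m := by group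
        _ = z ^ m * (z * g * x) * x ^ m := by rw [hxg]
        _ = z ^ (m+1) * g * x ^ (m+1) := by rw [pow_succ, pow_succ]; group
  have : ⁅x ^ n, g⁆ = x ^ n * g * (x ^ n)⁻¹ * g⁻¹ := commutatorElement_def _ _
  rw [this, key n]
  group

-- ### Lemma K : kernel automorphisms

universe u

lemma lemmaK {p : ℕ} (hp : p.Prime) :
    ∀ (c : ℕ) (G : Type u) [Group G] [Group.IsNilpotent G],
      Group.nilpotencyClass G ≤ c →
      ∀ (ρ σ : ℕ),
      (∀ x : G, x ^ p ^ ρ ∈ commutator G) →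
      (∀ x ∈ Subgroup.center G, x ^ p ^ σ = 1) →
      ∀ v : G ≃* G, (∀ x : G, x⁻¹ * v x ∈ groupP p G) →
        ∀ x : G, (v ^ p ^ (min ρ σ * c - 1)) x = x := by
  intro c
  induction c with
  | zero =>
    intro G _ _ hcls ρ σ hρ hσ v hv x
    have hsub : Subsingleton G :=
      nilpotencyClass_zero_iff_subsingleton.mp (Nat.le_zero.mp hcls)
    exact Subsingleton.elim _ _
  | succ c ih =>
    intro G _ _ hcls ρ σ hρ hσ v hv x
    by_cases hτ0 : min ρ σ = 0
    · have hsub : Subsingleton G := by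
        rcases Nat.min_eq_zero_iff.mp hτ0 with h0 | h0
        · apply subsingleton_of_commutator_eq_top
          apply le_antisymm le_top
          intro g _
          have h1 := hρ g
          rwa [h0, pow_zero, pow_one] at h1
        · apply subsingleton_of_center_le_bot
          intro z hz
          have h1 := hσ z hz
          rwa [h0, pow_zero, pow_one] at h1
      exact Subsingleton.elim _ _
    have hτ1 : 1 ≤ min ρ σ := by omega
    by_cases hab : Group.nilpotencyClass G ≤ 1
    · -- abelian case
      have hcommutator : commutator G = ⊥ := by
        have h1 : Subgroup.lowerCentralSeries (⊤ : Subgroup G) 1 ≤ Subgroup.lowerCentralSeries (⊤ : Subgroup G) (Group.nilpotencyClass G) :=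
          Subgroup.lowerCentralSeries_antitone ⊤ hab
        have h2 : Subgroup.lowerCentralSeries (⊤ : Subgroup G) (Group.nilpotencyClass G) = ⊥ :=
          lowerCentralSeries_nilpotencyClass
        rw [← Subgroup.top_lowerCentralSeries_one]
        exact le_antisymm (h2 ▸ h1) bot_le
      have hcomm : ∀ a b : G, a * b = b * a := by
        intro a b
        have h1 : ⁅a, b⁆ ∈ commutator G := by
          rw [commutator_def]
          exact Subgroup.commutator_mem_commutator (Subgroup.mem_top a) (Subgroup.mem_top b)
        rw [hcommutator, Subgroup.mem_bot] at h1
        exact commutatorElement_eq_one_iff_commute.mp h1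
      have hexp : ∀ y : G, y ^ p ^ (min ρ σ) = 1 := by
        intro y
        rcases le_total ρ σ with hle | hle
        · rw [min_eq_left hle]
          have h1 := hρ y
          rwa [hcommutator, Subgroup.mem_bot] at h1
        · rw [min_eq_right hle]
          exact hσ y (Subgroup.mem_center_iff.mpr (fun g => hcomm g y))
      have hstep := abelian_step hp (v.toMonoidHom : Monoid.End G) (min ρ σ) hcomm hexp hv
      have harith : p ^ (min ρ σ * (c + 1) - 1)
          = p ^ (min ρ σ - 1) * p ^ (min ρ σ * (c + 1) - min ρ σ) := by
        rw [← pow_add]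
        congr 1
        have h1 : min ρ σ ≤ min ρ σ * (c + 1) := Nat.le_mul_of_pos_right _ (by omega)
        omega
      rw [mulaut_pow_apply v (v.toMonoidHom : Monoid.End G) (fun _ => rfl), harith]
      exact end_pow_fix _ _ hstep _ x
    · -- inductive step via the centre
      have hc1 : 1 ≤ c := by omega
      -- v preserves the centre
      have hvc : ∀ w : G ≃* G, ∀ z ∈ Subgroup.center G, w z ∈ Subgroup.center G := by
        intro w z hz
        rw [Subgroup.mem_center_iff]
        intro g
        have h1 : w (z * w.symm g) = w z * g := by rw [map_mul, MulEquiv.apply_symm_apply]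
        have h2 : w (w.symm g * z) = g * w z := by rw [map_mul, MulEquiv.apply_symm_apply]
        rw [← h1, ← h2, ← Subgroup.mem_center_iff.mp hz (w.symm g)]
      have hmap : (Subgroup.center G).map (v : G →* G) = Subgroup.center G := by
        apply le_antisymm
        · rintro _ ⟨z, hz, rfl⟩
          exact hvc v z hz
        · intro z hz
          exact ⟨v.symm z, hvc v.symm z hz, by simp⟩
      set vbar := QuotientGroup.congr (Subgroup.center G) (Subgroup.center G) v hmap with hvbar
      have hvbar_mk : ∀ y : G, vbar ((y : G) : G ⧸ Subgroup.center G) = ((v y : G) : G ⧸ Subgroup.center G) :=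
        fun y => QuotientGroup.congr_mk _ _ v hmap y
      have hclsq : Group.nilpotencyClass (G ⧸ Subgroup.center G) ≤ c := by
        rw [nilpotencyClass_quotient_center]
        omega
      have hρq : ∀ y : G ⧸ Subgroup.center G, y ^ p ^ ρ ∈ commutator (G ⧸ Subgroup.center G) := by
        intro y
        obtain ⟨x', rfl⟩ := QuotientGroup.mk_surjective y
        rw [← QuotientGroup.mk_pow]
        have h1 := hρ x'
        have h2 : (QuotientGroup.mk' (Subgroup.center G)) (x' ^ p ^ ρ)
            ∈ (commutator G).map (QuotientGroup.mk' (Subgroup.center G)) :=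
          Subgroup.mem_map_of_mem _ h1
        have h3 : (commutator G).map (QuotientGroup.mk' (Subgroup.center G))
            ≤ commutator (G ⧸ Subgroup.center G) := by
          rw [commutator_def, commutator_def, Subgroup.map_commutator]
          exact Subgroup.commutator_mono le_top le_top
        exact h3 h2
      have hσq : ∀ y ∈ Subgroup.center (G ⧸ Subgroup.center G), y ^ p ^ σ = 1 := by
        intro y hy
        obtain ⟨x', rfl⟩ := QuotientGroup.mk_surjective y
        have hcent : ∀ g : G, ⁅x', g⁆ ∈ Subgroup.center G := by
          intro g
          rw [← QuotientGroup.eq_one_iff]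
          have h1 : ((⁅x', g⁆ : G) : G ⧸ Subgroup.center G)
              = ⁅((x' : G) : G ⧸ Subgroup.center G), ((g : G) : G ⧸ Subgroup.center G)⁆ :=
            map_commutatorElement (QuotientGroup.mk' (Subgroup.center G)) x' g
          rw [h1]
          apply commutatorElement_eq_one_iff_commute.mpr
          exact (Subgroup.mem_center_iff.mp hy _).symm
        rw [← QuotientGroup.mk_pow, QuotientGroup.eq_one_iff]
        rw [Subgroup.mem_center_iff]
        intro g
        have h1 : ⁅x' ^ p ^ σ, g⁆ = ⁅x', g⁆ ^ p ^ σ := commutator_pow_central x' g (hcent g) _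
        have h2 : ⁅x', g⁆ ^ p ^ σ = 1 := hσ _ (hcent g)
        have h3 : Commute (x' ^ p ^ σ) g :=
          commutatorElement_eq_one_iff_commute.mp (h1.trans h2)
        exact h3.symm
      have hvbarW : ∀ y : G ⧸ Subgroup.center G, y⁻¹ * vbar y ∈ groupP p (G ⧸ Subgroup.center G) := by
        intro y
        obtain ⟨x', rfl⟩ := QuotientGroup.mk_surjective y
        rw [hvbar_mk]
        have h1 : ((x' : G) : G ⧸ Subgroup.center G)⁻¹ * ((v x' : G) : G ⧸ Subgroup.center G)
            = (((x'⁻¹ * v x' : G)) : G ⧸ Subgroup.center G) := by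
          rw [QuotientGroup.mk_mul, QuotientGroup.mk_inv]
        rw [h1]
        exact mem_groupP_of_mem (QuotientGroup.mk' (Subgroup.center G)) (hv x')
      have ihq := ih (G ⧸ Subgroup.center G) hclsq ρ σ hρq hσq vbar hvbarW
      have hpowbar : ∀ (n : ℕ) (y : G), (vbar ^ n) ((y : G) : G ⧸ Subgroup.center G)
          = ((((v ^ n) y : G)) : G ⧸ Subgroup.center G) := by
        intro n
        induction n with
        | zero => intro y; simp
        | succ n ihn =>
          intro y
          rw [pow_succ', MulAut.mul_apply, ihn y, hvbar_mk]
          rw [show (v ^ (n+1)) y = v ((v ^ n) y) by rw [pow_succ', MulAut.mul_apply]]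
      set a := p ^ (min ρ σ * c - 1) with ha
      have hwZ : ∀ y : G, y⁻¹ * (v ^ a) y ∈ Subgroup.center G := by
        intro y
        have h1 : ((((v ^ a) y : G)) : G ⧸ Subgroup.center G) = ((y : G) : G ⧸ Subgroup.center G) := by
          rw [← hpowbar]
          exact ihq _
        exact QuotientGroup.eq.mp h1.symm
      have hwW : ∀ y : G, y⁻¹ * (v ^ a) y ∈ groupP p G :=
        displacement_pow_mem (groupP p G) v hv a
      have hstep := central_step hp ((v ^ a).toMonoidHom : Monoid.End G) ρ σ hρ hσ hwW hwZ
      have harith : p ^ (min ρ σ * (c + 1) - 1) = a * p ^ (min ρ σ) := by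
        rw [ha, ← pow_add]
        congr 1
        have h1 : 1 ≤ min ρ σ * c := Nat.one_le_iff_ne_zero.mpr (by positivity)
        have h2 : min ρ σ * (c + 1) = min ρ σ * c + min ρ σ := by ring
        omega
      rw [harith, pow_mul]
      rw [mulaut_pow_apply (v ^ a) ((v ^ a).toMonoidHom : Monoid.End G) (fun _ => rfl)]
      exact hstep x

-- ### Top quotient: nilpotency degree bound via cardinality

section Card

open Pointwise

variable {M : Type*} [CommGroup M] [Finite M] {p : ℕ}

lemma card_closure_le (hp : p.Prime) (hexp : ∀ x : M, x ^ p = 1) (S : Finset M) :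
    Nat.card (Subgroup.closure (S : Set M)) ≤ p ^ S.card := by
  classical
  induction S using Finset.induction with
  | empty => simp [Subgroup.closure_empty, Subgroup.card_bot]
  | @insert a S ha ih =>
    rw [Finset.coe_insert, Set.insert_eq, Subgroup.closure_union, ← Subgroup.zpowers_eq_closure]
    have hset : ((Subgroup.zpowers a ⊔ Subgroup.closure (S : Set M) : Subgroup M) : Set M)
        = (Subgroup.zpowers a : Set M) * (Subgroup.closure (S : Set M) : Set M) :=
      Subgroup.mul_normal _ _
    have hcard1 : Nat.card (Subgroup.zpowers a ⊔ Subgroup.closure (S : Set M) : Subgroup M)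
        ≤ Nat.card (Subgroup.zpowers a) * Nat.card (Subgroup.closure (S : Set M)) := by
      have h1 : Nat.card (Subgroup.zpowers a ⊔ Subgroup.closure (S : Set M) : Subgroup M)
          = Nat.card ((Subgroup.zpowers a : Set M) * (Subgroup.closure (S : Set M) : Set M) : Set M) := by
        rw [← hset]
        rfl
      rw [h1]
      exact Set.natCard_mul_le
    have hord : Nat.card (Subgroup.zpowers a) ≤ p := by
      rw [Nat.card_zpowers]
      have h1 : orderOf a ∣ p := orderOf_dvd_of_pow_eq_one (hexp a)
      exact Nat.le_of_dvd hp.pos h1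
    calc Nat.card (Subgroup.zpowers a ⊔ Subgroup.closure (S : Set M) : Subgroup M)
        ≤ Nat.card (Subgroup.zpowers a) * Nat.card (Subgroup.closure (S : Set M)) := hcard1
      _ ≤ p * p ^ S.card := Nat.mul_le_mul hord ih
      _ = p ^ (insert a S).card := by
          rw [Finset.card_insert_of_notMem ha, pow_succ]
          ring

lemma iter_trivial_of_gen (hp : p.Prime) (hexp : ∀ x : M, x ^ p = 1) (d : ℕ)
    (S : Finset M) (hScard : S.card ≤ d) (hSgen : Subgroup.closure (S : Set M) = ⊤)
    (F : M →* M) (m : ℕ) (hFnil : ∀ y : M, F^[p ^ m] y = 1) :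
    ∀ y : M, F^[d] y = 1 := by
  haveI : Fact p.Prime := ⟨hp⟩
  have hpg : IsPGroup p M := fun x => ⟨1, by rw [pow_one]; exact hexp x⟩
  obtain ⟨k, hk⟩ := IsPGroup.iff_card.mp hpg
  have hcardle : Nat.card M ≤ p ^ d := by
    have h1 := card_closure_le hp hexp S
    rw [hSgen] at h1
    have h2 : Nat.card (⊤ : Subgroup M) = Nat.card M := Subgroup.card_top
    rw [h2] at h1
    calc Nat.card M ≤ p ^ S.card := h1
      _ ≤ p ^ d := Nat.pow_le_pow_right hp.pos hScard
  have hkd : k ≤ d := by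
    rw [hk] at hcardle
    exact (Nat.pow_le_pow_iff_right hp.one_lt).mp hcardle
  set Fe : Monoid.End M := F with hFe
  set R : ℕ → Subgroup M := fun i => MonoidHom.range (Fe ^ i : Monoid.End M) with hR
  have hiter : ∀ (n : ℕ) (y : M), (Fe ^ n : Monoid.End M) y = F^[n] y := by
    intro n
    induction n with
    | zero => intro y; rfl
    | succ n ihn =>
      intro y
      rw [Function.iterate_succ_apply]
      have h1 : (Fe ^ (n + 1) : Monoid.End M) y = (Fe ^ n : Monoid.End M) (Fe y) := by
        rw [pow_succ]; rfl
      rw [h1]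
      exact ihn (F y)
  have hiter' : ∀ (n : ℕ) (y : M), (DFunLike.coe (F := M →* M) (Fe ^ n)) y = F^[n] y :=
    fun n y => hiter n y
  have hRle : ∀ i, R (i + 1) ≤ R i := by
    intro i
    rintro _ ⟨y, rfl⟩
    refine ⟨Fe y, ?_⟩
    rw [hiter', hiter', Function.iterate_succ_apply]; rfl
  have hRmap : ∀ i, R (i + 1) = Subgroup.map F (R i) := by
    intro i
    ext x
    constructor
    · rintro ⟨y, rfl⟩
      exact ⟨(Fe ^ i) y, ⟨y, rfl⟩, by
        rw [hiter i y, hiter' (i+1) y]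
        exact (Function.iterate_succ_apply' F i y).symm⟩
    · rintro ⟨w, ⟨y, rfl⟩, rfl⟩
      exact ⟨y, by rw [hiter' (i+1) y, Function.iterate_succ_apply' F i y, hiter' i y]⟩
  have hRiter_bot : ∀ i, R (i + p ^ m) = ⊥ := by
    intro i
    apply le_antisymm _ bot_le
    rintro _ ⟨y, rfl⟩
    rw [Subgroup.mem_bot, hiter', Nat.add_comm, Function.iterate_add_apply]
    exact hFnil _
  have hstab : ∀ i, R (i + 1) = R i → R i = ⊥ := by
    intro i heq
    have hconst : ∀ l, R (i + l) = R i := by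
      intro l
      induction l with
      | zero => rfl
      | succ l ihl =>
        have : i + (l + 1) = (i + l) + 1 := by omega
        rw [this, hRmap, ihl, ← hRmap, heq]
    rw [← hconst (p ^ m)]
    exact hRiter_bot i
  have hmain : ∀ i, R i = ⊥ ∨ Nat.card (R i) * p ^ i ≤ p ^ k := by
    intro i
    induction i with
    | zero =>
      right
      have h1 : R 0 = ⊤ := by
        apply (Subgroup.eq_top_iff' _).mpr
        intro y
        exact ⟨y, rfl⟩
      rw [h1, Subgroup.card_top, hk, pow_zero, mul_one]
    | succ i ihi =>
      rcases ihi with hbot | hle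
      · left
        exact le_antisymm (hbot ▸ hRle i) bot_le
      by_cases heq : R (i + 1) = R i
      · left
        rw [heq]
        exact hstab i heq
      · right
        have hlt : R (i + 1) < R i := lt_of_le_of_ne (hRle i) heq
        have hdvd1 : Nat.card (R (i + 1)) ∣ Nat.card (R i) := Subgroup.card_dvd_of_le (hRle i)
        have hdvd2 : Nat.card (R i) ∣ p ^ k := hk ▸ Subgroup.card_subgroup_dvd_card (R i)
        have hdvd3 : Nat.card (R (i + 1)) ∣ p ^ k := dvd_trans hdvd1 hdvd2
        obtain ⟨α, hαk, hα⟩ := (Nat.dvd_prime_pow hp).mp hdvd3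
        obtain ⟨β, hβk, hβ⟩ := (Nat.dvd_prime_pow hp).mp hdvd2
        have hcardlt : Nat.card (R (i + 1)) < Nat.card (R i) := by
          rcases lt_or_ge (Nat.card (R (i + 1))) (Nat.card (R i)) with h | h
          · exact h
          · exfalso
            apply heq
            have := Subgroup.card_le_of_le (hRle i)
            -- cards equal: subgroups equal
            have hcards : Nat.card (R (i+1)) = Nat.card (R i) := le_antisymm this h
            apply SetLike.coe_injective
            apply Set.eq_of_subset_of_ncard_le (SetLike.coe_subset_coe.mpr (hRle i))
            rw [← Nat.card_coe_set_eq, ← Nat.card_coe_set_eq]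
            · exact le_of_eq (by exact_mod_cast hcards.symm)
        have hαβ : α < β := by
          rw [hα, hβ] at hcardlt
          exact (Nat.pow_lt_pow_iff_right hp.one_lt).mp hcardlt
        have hstep : Nat.card (R (i + 1)) * p ≤ Nat.card (R i) := by
          rw [hα, hβ, ← pow_succ]
          exact Nat.pow_le_pow_right hp.pos (by omega)
        calc Nat.card (R (i + 1)) * p ^ (i + 1)
            = (Nat.card (R (i + 1)) * p) * p ^ i := by ring
          _ ≤ Nat.card (R i) * p ^ i := Nat.mul_le_mul_right _ hstep
          _ ≤ p ^ k := hle
  intro y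
  have hfinal : R d = ⊥ := by
    rcases hmain d with hbot | hle
    · exact hbot
    · apply Subgroup.eq_bot_of_card_le
      have h1 : p ^ k ≤ p ^ d := Nat.pow_le_pow_right hp.pos hkd  -- wrong lemma? needs 1 ≤ p
      have h2 : Nat.card (R d) * p ^ d ≤ 1 * p ^ d := by
        calc Nat.card (R d) * p ^ d ≤ p ^ k := hle
          _ ≤ p ^ d := h1
          _ = 1 * p ^ d := (one_mul _).symm
      exact Nat.le_of_mul_le_mul_right h2 (pow_pos hp.pos d)
  have h1 : F^[d] y ∈ R d := ⟨y, hiter d y⟩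
  rw [hfinal, Subgroup.mem_bot] at h1
  exact h1

end Card

-- ### Top step: action on the Frattini-type quotient

section TopStep

lemma top_step {G : Type*} [Group G] [Finite G] {p : ℕ} (hp : p.Prime) (d : ℕ)
    (hd : Group.rank G ≤ d) (u : G ≃* G) (m : ℕ) (hu : u ^ p ^ m = 1) :
    ∀ x : G, x⁻¹ * (u ^ (p ^ (if p = 2 then 2 * d - 1 else d - 1))) x ∈ groupP p G := by
  classical
  set W := groupP p G with hWdef
  set V := G ⧸ W with hVdef
  have hVcomm : ∀ a b : V, a * b = b * a := by
    intro a b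
    obtain ⟨x, rfl⟩ := QuotientGroup.mk_surjective a
    obtain ⟨y, rfl⟩ := QuotientGroup.mk_surjective b
    rw [← QuotientGroup.mk_mul, ← QuotientGroup.mk_mul]
    apply QuotientGroup.eq.mpr
    have h1 : (x * y)⁻¹ * (y * x) = ⁅y⁻¹, x⁻¹⁆ := by
      rw [commutatorElement_def]
      group
    rw [h1]
    exact commutator_mem_groupP _ _
  letI : CommGroup V := { (inferInstance : Group V) with mul_comm := hVcomm }
  have hle : W ≤ W.comap u.toMonoidHom :=
    Subgroup.map_le_iff_le_comap.mp (map_groupP_le u.toMonoidHom)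
  set Te : Monoid.End V := QuotientGroup.map W W u.toMonoidHom hle with hTe
  have hTmk : ∀ x : G, Te ((x : G) : V) = ((u x : G) : V) := fun x => rfl
  have hZ : ∀ y : V, y⁻¹ * Te y ∈ Subgroup.center V :=
    fun y => Subgroup.mem_center_iff.mpr (fun g => hVcomm g _)
  set fV := dispHom Te hZ with hfVdef
  have hcen : ∀ y : V, fV y ∈ Subgroup.center V := fun y => hZ y
  have hTw : ∀ y : V, Te y = y * fV y := by
    intro y
    show Te y = y * (y⁻¹ * Te y)
    rw [mul_inv_cancel_left]
  have hTn : ∀ (n : ℕ) (x : G), (Te ^ n : Monoid.End V) ((x : G) : V) = (((u ^ n) x : G) : V) := by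
    intro n
    induction n with
    | zero => intro x; rfl
    | succ n ihn =>
      intro x
      have h1 : (Te ^ (n + 1) : Monoid.End V) ((x : G) : V)
          = (Te ^ n : Monoid.End V) (Te ((x : G) : V)) := by
        rw [pow_succ]; rfl
      rw [h1, hTmk, ihn (u x), pow_succ]
      rfl
  have hTid : ∀ y : V, (Te ^ (p ^ m) : Monoid.End V) y = y := by
    intro y
    obtain ⟨x, rfl⟩ := QuotientGroup.mk_surjective y
    have h1 := hTn (p ^ m) x
    rw [hu] at h1
    simpa using h1
  -- generators of V
  obtain ⟨S, hScard, hSgen⟩ := Group.rank_spec G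
  set SV : Finset V := S.image (fun g => ((g : G) : V)) with hSV
  have hSVgen : Subgroup.closure (SV : Set V) = ⊤ := by
    rw [hSV, Finset.coe_image]
    have h1 : (fun g => ((g : G) : V)) '' (S : Set G)
        = (QuotientGroup.mk' W) '' (S : Set G) := rfl
    rw [h1, ← MonoidHom.map_closure, hSgen]
    exact Subgroup.map_top_of_surjective _ (QuotientGroup.mk'_surjective W)
  have hSVcard : SV.card ≤ d := le_trans Finset.card_image_le (le_of_eq_of_le hScard hd)
  -- now split on p = 2
  by_cases hp2 : p = 2
  · -- p = 2
    subst hp2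
    rw [if_pos rfl]
    have hexpV4 : ∀ y : V, y ^ 4 = 1 := by
      intro y
      obtain ⟨x, rfl⟩ := QuotientGroup.mk_surjective y
      rw [← QuotientGroup.mk_pow, QuotientGroup.eq_one_iff]
      have h1 := pow_mem_groupP (p := 2) (G := G) x
      rwa [if_pos rfl] at h1
    set V2 : Subgroup V := MonoidHom.range (powMonoidHom 2 : V →* V) with hV2
    have hmemV2 : ∀ y : V, y ^ 2 ∈ V2 := fun y => ⟨y, rfl⟩
    have hle2 : V2 ≤ V2.comap fV := by
      rintro _ ⟨z, rfl⟩
      show fV ((powMonoidHom 2 : V →* V) z) ∈ V2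
      have h1 : (powMonoidHom 2 : V →* V) z = z ^ 2 := rfl
      rw [h1, map_pow]
      exact hmemV2 _
    set fbar : V ⧸ V2 →* V ⧸ V2 := QuotientGroup.map V2 V2 fV hle2 with hfbar
    have hfbar_mk : ∀ y : V, fbar ((y : V) : V ⧸ V2) = ((fV y : V) : V ⧸ V2) :=
      fun y => rfl
    have hexp2 : ∀ z : V ⧸ V2, z ^ 2 = 1 := by
      intro z
      obtain ⟨y, rfl⟩ := QuotientGroup.mk_surjective z
      rw [← QuotientGroup.mk_pow, QuotientGroup.eq_one_iff]
      exact hmemV2 y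
    set wbar : Monoid.End (V ⧸ V2) :=
      { toFun := fun z => z * fbar z
        map_one' := by simp
        map_mul' := by
          intro a b
          show (a * b) * fbar (a * b) = (a * fbar a) * (b * fbar b)
          rw [map_mul]
          exact mul_mul_mul_comm a b (fbar a) (fbar b) } with hwbar
    have hwbar_mk : ∀ y : V, wbar ((y : V) : V ⧸ V2) = ((Te y : V) : V ⧸ V2) := by
      intro y
      show ((y : V) : V ⧸ V2) * fbar ((y : V) : V ⧸ V2) = ((Te y : V) : V ⧸ V2)
      rw [hfbar_mk, ← QuotientGroup.mk_mul, ← hTw]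
    have hwbar_n : ∀ (n : ℕ) (y : V),
        (wbar ^ n : Monoid.End (V ⧸ V2)) ((y : V) : V ⧸ V2) = (((Te ^ n : Monoid.End V) y : V) : V ⧸ V2) := by
      intro n
      induction n with
      | zero => intro y; rfl
      | succ n ihn =>
        intro y
        have h1 : (wbar ^ (n + 1) : Monoid.End (V ⧸ V2)) ((y : V) : V ⧸ V2)
            = (wbar ^ n : Monoid.End (V ⧸ V2)) (wbar ((y : V) : V ⧸ V2)) := by
          rw [pow_succ]; rfl
        rw [h1, hwbar_mk, ihn (Te y), pow_succ]
        rfl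
    have hwid : ∀ z : V ⧸ V2, (wbar ^ (2 ^ m) : Monoid.End (V ⧸ V2)) z = z := by
      intro z
      obtain ⟨y, rfl⟩ := QuotientGroup.mk_surjective z
      rw [hwbar_n, hTid]
    have hfbarcen : ∀ z : V ⧸ V2, fbar z ∈ Subgroup.center (V ⧸ V2) :=
      fun z => Subgroup.mem_center_iff.mpr (fun g => mul_comm g _)
    have hwbarw : ∀ z : V ⧸ V2, wbar z = z * fbar z := fun z => rfl
    have hnil2 : ∀ z : V ⧸ V2, fbar^[2 ^ m] z = 1 :=
      lead hp wbar fbar hfbarcen hwbarw hexp2 m hwid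
    set SV2 : Finset (V ⧸ V2) := SV.image (fun y => ((y : V) : V ⧸ V2)) with hSV2
    have hSV2gen : Subgroup.closure (SV2 : Set (V ⧸ V2)) = ⊤ := by
      rw [hSV2, Finset.coe_image]
      have h1 : (fun y => ((y : V) : V ⧸ V2)) '' (SV : Set V)
          = (QuotientGroup.mk' V2) '' (SV : Set V) := rfl
      rw [h1, ← MonoidHom.map_closure, hSVgen]
      exact Subgroup.map_top_of_surjective _ (QuotientGroup.mk'_surjective V2)
    have hSV2card : SV2.card ≤ d := le_trans Finset.card_image_le hSVcard
    have hfbar_d : ∀ z : V ⧸ V2, fbar^[d] z = 1 :=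
      iter_trivial_of_gen hp hexp2 d SV2 hSV2card hSV2gen fbar m hnil2
    have hiter_mk : ∀ (i : ℕ) (y : V), fbar^[i] ((y : V) : V ⧸ V2) = ((fV^[i] y : V) : V ⧸ V2) := by
      intro i
      induction i with
      | zero => intro y; rfl
      | succ i ihi =>
        intro y
        rw [Function.iterate_succ_apply', Function.iterate_succ_apply', ihi, hfbar_mk]
    have hsq : ∀ y : V, ∃ z : V, fV^[d] y = z ^ 2 := by
      intro y
      have h1 : ((fV^[d] y : V) : V ⧸ V2) = 1 := by
        rw [← hiter_mk]
        exact hfbar_d _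
      rw [QuotientGroup.eq_one_iff] at h1
      obtain ⟨z, hz⟩ := h1
      exact ⟨z, hz.symm⟩
    have hord : ∀ (i : ℕ) (y : V), 1 ≤ i → (fV^[i] y) ^ (2 ^ (2 * d - 1 + 1 - i)) = 1 := by
      intro i y hi
      rcases le_or_gt (i + 2) (2 * d) with hcase | hcase
      · -- small i : use exponent 4
        have h1 : (2 : ℕ) ^ (2 * d - 1 + 1 - i) = 4 * 2 ^ (2 * d - i - 2) := by
          rw [show (4 : ℕ) = 2 ^ 2 by norm_num, ← pow_add]
          congr 1
          omega
        rw [h1, pow_mul, hexpV4, one_pow]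
      rcases lt_or_ge i (2 * d) with hcase2 | hcase2
      · -- i = 2d - 1
        obtain ⟨z, hz⟩ := hsq y
        have hieq : i = (d - 1) + d := by omega
        have he : 2 * d - 1 + 1 - i = 1 := by omega
        rw [he, hieq, Function.iterate_add_apply, hz, iterate_map_pow, ← pow_mul]
        have h4 : 2 * 2 ^ 1 = 4 := by norm_num
        rw [h4]
        exact hexpV4 _
      · -- i ≥ 2d
        obtain ⟨z, hz⟩ := hsq y
        have he : 2 * d - 1 + 1 - i = 0 := by omega
        rw [he, pow_zero, pow_one]
        obtain ⟨z₁, hz₁⟩ := hsq z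
        have hieq : i = ((i - 2 * d) + d) + d := by omega
        rw [hieq, Function.iterate_add_apply, hz, iterate_map_pow,
          Function.iterate_add_apply, hz₁, iterate_map_pow, ← pow_mul]
        have h4 : 2 * 2 = 4 := by norm_num
        rw [h4]
        exact hexpV4 _
    intro x
    have hfinal : (Te ^ (2 ^ (2 * d - 1)) : Monoid.End V) ((x : G) : V) = ((x : G) : V) :=
      aut_order_bound hp (2 * d - 1) Te fV hcen hTw hord ((x : G) : V)
    rw [hTn] at hfinal
    exact QuotientGroup.eq.mp hfinal.symm
  · -- p odd
    rw [if_neg hp2]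
    have hexpV : ∀ y : V, y ^ p = 1 := by
      intro y
      obtain ⟨x, rfl⟩ := QuotientGroup.mk_surjective y
      rw [← QuotientGroup.mk_pow, QuotientGroup.eq_one_iff]
      have h1 := pow_mem_groupP (p := p) (G := G) x
      rwa [if_neg hp2] at h1
    have hnil : ∀ y : V, fV^[p ^ m] y = 1 :=
      lead hp Te fV hcen hTw hexpV m hTid
    have hfd : ∀ y : V, fV^[d] y = 1 :=
      iter_trivial_of_gen hp hexpV d SV hSVcard hSVgen fV m hnil
    have hord : ∀ (i : ℕ) (y : V), 1 ≤ i → (fV^[i] y) ^ (p ^ (d - 1 + 1 - i)) = 1 := by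
      intro i y hi
      rcases lt_or_ge i d with hcase | hcase
      · have h1 : p ^ (d - 1 + 1 - i) = p * p ^ (d - 1 - i) := by
          rw [← pow_succ']
          congr 1
          omega
        rw [h1, pow_mul, hexpV, one_pow]
      · have hieq : i = (i - d) + d := by omega
        rw [hieq, Function.iterate_add_apply, hfd y, iterate_map_one, one_pow]
    intro x
    have hfinal : (Te ^ (p ^ (d - 1)) : Monoid.End V) ((x : G) : V) = ((x : G) : V) :=
      aut_order_bound hp (d - 1) Te fV hcen hTw hord ((x : G) : V)
    rw [hTn] at hfinal
    exact QuotientGroup.eq.mp hfinal.symm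

end TopStep

/-- **Theorem C (second part).** Let `G` be a finite `p`-group of class `c` generated by `d`
elements, and `t = min r s` where `exp(G/[G,G]) = p ^ r` and `exp(Z(G)) = p ^ s`. Then for every
`p`-subgroup `P` of `Aut(G)`, `exp(P) ≤ p ^ (t²c - t + d - 1)` if `p > 2`, and
`exp(P) ≤ p ^ (t²c - t + 2d - 1)` if `p = 2`. -/
theorem pSubgroup_aut_exponent_le (p c r s d : ℕ) (hp : p.Prime) (G : Type*) [Group G] [Finite G]
    (hG : IsPGroup p G) [Group.IsNilpotent G] (hc : Group.nilpotencyClass G = c)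
    (hd : Group.rank G ≤ d)
    (hr : Monoid.exponent (G ⧸ commutator G) = p ^ r)
    (hs : Monoid.exponent ↥(Subgroup.center G) = p ^ s)
    (P : Subgroup (G ≃* G)) (hP : IsPGroup p ↥P) :
    Monoid.exponent ↥P ≤
      if p = 2 then p ^ (min r s ^ 2 * c - min r s + 2 * d - 1)
      else p ^ (min r s ^ 2 * c - min r s + d - 1) := by
  classical
  haveI : Fact p.Prime := ⟨hp⟩
  have hρ : ∀ x : G, x ^ p ^ r ∈ commutator G := by
    intro x
    have h1 : ((x : G ⧸ commutator G)) ^ p ^ r = 1 := by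
      rw [← hr]; exact Monoid.pow_exponent_eq_one _
    rwa [← QuotientGroup.mk_pow, QuotientGroup.eq_one_iff] at h1
  have hσ : ∀ x ∈ Subgroup.center G, x ^ p ^ s = 1 := by
    intro x hx
    have h1 : (⟨x, hx⟩ : Subgroup.center G) ^ p ^ s = 1 := by
      rw [← hs]; exact Monoid.pow_exponent_eq_one _
    have h2 := congrArg (Subtype.val) h1
    simpa using h2
  set τ := min r s with hτ
  set B : ℕ := if p = 2 then τ ^ 2 * c - τ + 2 * d - 1 else τ ^ 2 * c - τ + d - 1 with hB
  have key : ∀ g : ↥P, g ^ p ^ B = 1 := by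
    intro g
    obtain ⟨m, hm⟩ := hP g
    have hm' : (g : G ≃* G) ^ p ^ m = 1 := by
      have h1 : ((g ^ p ^ m : ↥P) : G ≃* G) = (g : G ≃* G) ^ p ^ m := by
        push_cast
        rfl
      rw [← h1, hm]
      rfl
    have hmain : (g : G ≃* G) ^ p ^ B = 1 := by
      rcases subsingleton_or_nontrivial G with hsub | hnt
      · apply MulEquiv.ext
        intro x
        exact Subsingleton.elim _ _
      · haveI := hnt
        have hs1 : 1 ≤ s := by
          by_contra h
          have hs0 : s = 0 := by omega
          haveI hcnt := hG.center_nontrivial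
          obtain ⟨z, hz⟩ := exists_ne (1 : Subgroup.center G)
          have h1 : (z : G) ^ p ^ s = 1 := hσ (z : G) z.2
          rw [hs0, pow_zero, pow_one] at h1
          exact hz (Subtype.ext h1)
        have hr1 : 1 ≤ r := by
          by_contra h
          have hr0 : r = 0 := by omega
          have hcom : commutator G = ⊤ := by
            apply (Subgroup.eq_top_iff' _).mpr
            intro x
            have h1 := hρ x
            rwa [hr0, pow_zero, pow_one] at h1
          exact (not_subsingleton_iff_nontrivial.mpr hnt)
            (subsingleton_of_commutator_eq_top hcom)
        have hτ1 : 1 ≤ τ := le_min hr1 hs1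
        have hc1 : 1 ≤ c := by
          by_contra h
          have h0 : Group.nilpotencyClass G = 0 := by omega
          exact (not_subsingleton_iff_nontrivial.mpr hnt)
            (nilpotencyClass_zero_iff_subsingleton.mp h0)
        have hd1 : 1 ≤ d := by
          by_contra h
          have hd0 : d = 0 := by omega
          obtain ⟨S, hS1, hS2⟩ := Group.rank_spec G
          have hS0 : S.card = 0 := by omega
          rw [Finset.card_eq_zero.mp hS0] at hS2
          simp only [Finset.coe_empty, Subgroup.closure_empty] at hS2
          exact (not_subsingleton_iff_nontrivial.mpr hnt)
            (subsingleton_of_top_le_bot' (le_of_eq hS2.symm))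
        set E : ℕ := if p = 2 then 2 * d - 1 else d - 1 with hE
        have htop := top_step hp d hd (g : G ≃* G) m hm'
        rw [← hE] at htop
        have hker := lemmaK hp c G (le_of_eq hc) r s hρ hσ ((g : G ≃* G) ^ p ^ E) htop
        have hN : ((g : G ≃* G)) ^ (p ^ E * p ^ (τ * c - 1)) = 1 := by
          apply MulEquiv.ext
          intro x
          rw [pow_mul]
          exact (hker x).trans rfl
        have hEB : E + (τ * c - 1) ≤ B := by
          have h1 : 1 ≤ τ * c := Nat.one_le_iff_ne_zero.mpr
            (Nat.mul_ne_zero (by omega) (by omega))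
          have h2 : τ * c - 1 ≤ τ * (τ * c - 1) := Nat.le_mul_of_pos_left _ (by omega)
          have h3 : τ * (τ * c - 1) + τ = τ ^ 2 * c := by
            have h4 : τ * (τ * c - 1) + τ * 1 = τ * (τ * c) := by
              rw [← Nat.mul_add]
              congr 1
              omega
            rw [mul_one] at h4
            rw [h4]
            ring
          rw [hB, hE]
          by_cases h5 : p = 2 <;> simp only [h5, if_true, if_false] <;> omega
        obtain ⟨q, hq⟩ : p ^ (E + (τ * c - 1)) ∣ p ^ B := pow_dvd_pow p hEB
        calc (g : G ≃* G) ^ p ^ B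
            = ((g : G ≃* G) ^ (p ^ E * p ^ (τ * c - 1))) ^ q := by
              rw [← pow_mul, ← pow_add, ← hq]
          _ = 1 := by rw [hN, one_pow]
    apply Subtype.ext
    have h1 : ((g ^ p ^ B : ↥P) : G ≃* G) = (g : G ≃* G) ^ p ^ B := by
      push_cast
      rfl
    rw [h1, hmain]
    rfl
  have hdvd : Monoid.exponent ↥P ∣ p ^ B := Monoid.exponent_dvd_of_forall_pow_eq_one key
  have hle := Nat.le_of_dvd (pow_pos hp.pos B) hdvd
  by_cases h2 : p = 2
  · rw [if_pos h2]
    rw [hB, if_pos h2] at hle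
    exact hle
  · rw [if_neg h2]
    rw [hB, if_neg h2] at hle
    exact hle
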